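/- Let a_7, b_7, c_7, A_7, B_7, C_7 be real numbers with a_7 = -c_7 - A_7 - C_7. With F^+(x,y) = a_7 x + b_7 y^3, G^+(x,y) = c_7 y, define R^+(θ,r) = cos θ · F^+(r cos θ, r sin θ) + sin θ · G^+(r cos θ, r sin θ) and T^+(θ,r) = cos θ · G^+(r cos θ, r sin θ) - sin θ · F^+(r cos θ, r sin θ), and set P_1^+(θ,r) = -R^+(θ,r), P_2^+(θ,r) = -R^+(θ,r) T^+(θ,r)/r; define P_1^-, P_2^- analogously with A_7, B_7, C_7 in place of a_7, b_7, c_7. Let y_1^±(θ,r) = ∫_0^θ P_1^±(φ,r) dφ and y_2^±(θ,r) = ∫_0^θ [2 P_2^±(φ,r) + 2 (∂P_1^±/∂r)(φ,r) y_1^±(φ,r)] dφ. Then for every r > 0, f̃_2(r) := (y_2^+(π,r) - y_2^-(-π,r))/2 = (3π/32) r^3 (B_7 - b_7)(A_7 + C_7). -/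

import Mathlib

open Real intervalIntegral

set_option maxHeartbeats 4000000
set_option maxRecDepth 100000

/-- `R(θ,r) = cos θ · F(r cos θ, r sin θ) + sin θ · G(r cos θ, r sin θ)` for
`F(x,y) = a x + b y³`, `G(x,y) = c y`. -/
noncomputable def Rfun (a b c θ r : ℝ) : ℝ :=
  Real.cos θ * (a * (r * Real.cos θ) + b * (r * Real.sin θ) ^ 3)
    + Real.sin θ * (c * (r * Real.sin θ))

/-- `T(θ,r) = cos θ · G(r cos θ, r sin θ) - sin θ · F(r cos θ, r sin θ)` for
`F(x,y) = a x + b y³`, `G(x,y) = c y`. -/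
noncomputable def Tfun (a b c θ r : ℝ) : ℝ :=
  Real.cos θ * (c * (r * Real.sin θ))
    - Real.sin θ * (a * (r * Real.cos θ) + b * (r * Real.sin θ) ^ 3)

/-- `P₁ = -R`. -/
noncomputable def P1 (a b c θ r : ℝ) : ℝ := -(Rfun a b c θ r)

/-- `P₂ = -R·T/r`. -/
noncomputable def P2 (a b c θ r : ℝ) : ℝ := -(Rfun a b c θ r) * Tfun a b c θ r / r

/-- `y₁(θ,r) = ∫₀^θ P₁(φ,r) dφ`. -/
noncomputable def y1 (a b c θ r : ℝ) : ℝ := ∫ φ in (0:ℝ)..θ, P1 a b c φ r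

/-- `y₂(θ,r) = ∫₀^θ (2 P₂(φ,r) + 2 ∂P₁/∂r(φ,r) y₁(φ,r)) dφ`. -/
noncomputable def y2 (a b c θ r : ℝ) : ℝ :=
  ∫ φ in (0:ℝ)..θ,
    (2 * P2 a b c φ r + 2 * deriv (fun s => P1 a b c φ s) r * y1 a b c φ r)

private lemma hY1aux (a b c r t : ℝ) :
    HasDerivAt (fun x : ℝ => ((1/2) * c * r + (-1/2) * a * r) * (x^0 * Real.sin x^1 * Real.cos x^1) + ((-1/4) * b * r^3) * (x^0 * Real.sin x^4 * Real.cos x^0) + ((-1/2) * c * r + (-1/2) * a * r) * (x^1 * Real.sin x^0 * Real.cos x^0))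
      (((-1/2) * c * r + (-1/2) * a * r) + ((1/2) * c * r + (-1/2) * a * r) * Real.cos t^2 + ((-1/2) * c * r + (1/2) * a * r) * Real.sin t^2 + ((-1) * b * r^3) * Real.sin t^3 * Real.cos t) t := by
  have h := ((((((hasDerivAt_pow 0 t).mul ((Real.hasDerivAt_sin t).pow 1)).mul ((Real.hasDerivAt_cos t).pow 1)).const_mul ((1/2) * c * r + (-1/2) * a * r)).add ((((hasDerivAt_pow 0 t).mul ((Real.hasDerivAt_sin t).pow 4)).mul ((Real.hasDerivAt_cos t).pow 0)).const_mul ((-1/4) * b * r^3))).add ((((hasDerivAt_pow 1 t).mul ((Real.hasDerivAt_sin t).pow 0)).mul ((Real.hasDerivAt_cos t).pow 0)).const_mul ((-1/2) * c * r + (-1/2) * a * r)))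
  refine h.congr_deriv ?_
  simp only [Pi.pow_apply, Pi.mul_apply]
  push_cast
  ring

private lemma hY1aux' (a b c r t : ℝ) :
    HasDerivAt (fun x : ℝ => ((1/2) * c * r + (-1/2) * a * r) * (x^0 * Real.sin x^1 * Real.cos x^1) + ((-1/4) * b * r^3) * (x^0 * Real.sin x^4 * Real.cos x^0) + ((-1/2) * c * r + (-1/2) * a * r) * (x^1 * Real.sin x^0 * Real.cos x^0)) (P1 a b c t r) t := by
  have h := hY1aux a b c r t
  have e : (((-1/2) * c * r + (-1/2) * a * r) + ((1/2) * c * r + (-1/2) * a * r) * Real.cos t^2 + ((-1/2) * c * r + (1/2) * a * r) * Real.sin t^2 + ((-1) * b * r^3) * Real.sin t^3 * Real.cos t) = P1 a b c t r := by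
    unfold P1 Rfun
    linear_combination (((1/2) * c * r + (1/2) * a * r)) * Real.sin_sq_add_cos_sq t
  rwa [e] at h

private lemma y1_eq (a b c r θ : ℝ) :
    y1 a b c θ r = ((1/2) * c * r + (-1/2) * a * r) * (θ^0 * Real.sin θ^1 * Real.cos θ^1) + ((-1/4) * b * r^3) * (θ^0 * Real.sin θ^4 * Real.cos θ^0) + ((-1/2) * c * r + (-1/2) * a * r) * (θ^1 * Real.sin θ^0 * Real.cos θ^0) := by
  unfold y1
  rw [intervalIntegral.integral_eq_sub_of_hasDerivAt (fun t _ => hY1aux' a b c r t)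
      ((by unfold P1 Rfun; fun_prop : Continuous fun φ => P1 a b c φ r).intervalIntegrable 0 θ)]
  simp only [Real.sin_zero, Real.cos_zero]
  ring

private lemma dP1_eq (a b c r t : ℝ) :
    deriv (fun s => P1 a b c t s) r = ((-1) * a) * Real.cos t^2 + ((-1) * c) * Real.sin t^2 + ((-3) * b * r^2) * Real.sin t^3 * Real.cos t := by
  have h2 : (fun s => P1 a b c t s)
      = (fun s : ℝ => -((a*Real.cos t^2 + c*Real.sin t^2)*s + (b*Real.cos t*Real.sin t^3)*s^3)) := by
    funext s; unfold P1 Rfun; ring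
  have h3 := (((hasDerivAt_id r).const_mul (a*Real.cos t^2 + c*Real.sin t^2)).add
    ((hasDerivAt_pow 3 r).const_mul (b*Real.cos t*Real.sin t^3))).neg
  have h4 : HasDerivAt (fun s => P1 a b c t s) (((-1) * a) * Real.cos t^2 + ((-1) * c) * Real.sin t^2 + ((-3) * b * r^2) * Real.sin t^3 * Real.cos t) r := by
    rw [h2]
    refine h3.congr_deriv ?_
    push_cast
    ring
  exact h4.deriv

private lemma P2_eq (a b c r : ℝ) (hr : r ≠ 0) (t : ℝ) :
    P2 a b c t r = ((-1) * a * c * r + (1) * a^2 * r) * Real.sin t * Real.cos t^3 + ((-1) * c^2 * r + (1) * a * c * r) * Real.sin t^3 * Real.cos t + ((-1) * b * c * r^3 + (2) * a * b * r^3) * Real.sin t^4 * Real.cos t^2 + ((1) * b * c * r^3) * Real.sin t^6 + ((1) * b^2 * r^5) * Real.sin t^7 * Real.cos t := by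
  unfold P2 Rfun Tfun
  field_simp
  ring

private lemma hQ2aux (a b c r t : ℝ) :
    HasDerivAt (fun x : ℝ => ((1/4) * c^2 * r + (-49/256) * b^2 * r^5 + (-1/4) * a^2 * r) * (x^0 * Real.sin x^0 * Real.cos x^2) + ((-3/32) * c^2 * r + (49/512) * b^2 * r^5 + (3/16) * a * c * r + (-3/32) * a^2 * r) * (x^0 * Real.sin x^0 * Real.cos x^4) + ((-7/256) * b^2 * r^5) * (x^0 * Real.sin x^0 * Real.cos x^6) + ((7/2048) * b^2 * r^5) * (x^0 * Real.sin x^0 * Real.cos x^8) + ((-41/64) * b * c * r^3 + (9/64) * a * b * r^3) * (x^0 * Real.sin x^1 * Real.cos x^1) + ((11/16) * b * c * r^3 + (-9/16) * a * b * r^3) * (x^0 * Real.sin x^1 * Real.cos x^3) + ((-15/64) * b * c * r^3 + (15/64) * a * b * r^3) * (x^0 * Real.sin x^1 * Real.cos x^5) + ((-1/4) * c^2 * r + (49/256) * b^2 * r^5 + (1/4) * a^2 * r) * (x^0 * Real.sin x^2 * Real.cos x^0) + ((9/16) * c^2 * r + (-147/256) * b^2 * r^5 + (-9/8) * a * c *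 r + (9/16) * a^2 * r) * (x^0 * Real.sin x^2 * Real.cos x^2) + ((105/256) * b^2 * r^5) * (x^0 * Real.sin x^2 * Real.cos x^4) + ((-49/512) * b^2 * r^5) * (x^0 * Real.sin x^2 * Real.cos x^6) + ((-11/16) * b * c * r^3 + (9/16) * a * b * r^3) * (x^0 * Real.sin x^3 * Real.cos x^1) + ((25/32) * b * c * r^3 + (-25/32) * a * b * r^3) * (x^0 * Real.sin x^3 * Real.cos x^3) + ((-3/32) * c^2 * r + (49/512) * b^2 * r^5 + (3/16) * a * c * r + (-3/32) * a^2 * r) * (x^0 * Real.sin x^4 * Real.cos x^0) + ((-105/256) * b^2 * r^5) * (x^0 * Real.sin x^4 * Real.cos x^2) + ((245/1024) * b^2 * r^5) * (x^0 * Real.sin x^4 * Real.cos x^4) + ((-15/64) * b * c * r^3 + (15/64) * a * b * r^3) * (x^0 * Real.sin x^5 * Real.cos x^1) + ((7/256) * b^2 * r^5) * (x^0 * Real.sin x^6 * Real.cos x^0) + ((-49/512) * b^2 * r^5) * (x^0 * Real.sin x^6 * Real.cos x^2) + ((7/2048) * b^2 * r^5) * (x^0 * Real.sin x^8 * Real.cos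 x^0) + ((15/32) * b * c * r^3 + (15/32) * a * b * r^3) * (x^1 * Real.sin x^0 * Real.cos x^0) + ((-3/8) * b * c * r^3 + (-3/8) * a * b * r^3) * (x^1 * Real.sin x^0 * Real.cos x^2) + ((3/32) * b * c * r^3 + (3/32) * a * b * r^3) * (x^1 * Real.sin x^0 * Real.cos x^4) + ((-1/2) * c^2 * r + (1/2) * a^2 * r) * (x^1 * Real.sin x^1 * Real.cos x^1) + ((3/8) * b * c * r^3 + (3/8) * a * b * r^3) * (x^1 * Real.sin x^2 * Real.cos x^0) + ((-9/16) * b * c * r^3 + (-9/16) * a * b * r^3) * (x^1 * Real.sin x^2 * Real.cos x^2) + ((3/32) * b * c * r^3 + (3/32) * a * b * r^3) * (x^1 * Real.sin x^4 * Real.cos x^0) + ((1/4) * c^2 * r + (1/2) * a * c * r + (1/4) * a^2 * r) * (x^2 * Real.sin x^0 * Real.cos x^0))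
      (((15/32) * b * c * r^3 + (15/32) * a * b * r^3) + ((-65/64) * b * c * r^3 + (-15/64) * a * b * r^3) * Real.cos t^2 + ((25/32) * b * c * r^3 + (-15/32) * a * b * r^3) * Real.cos t^4 + ((-15/64) * b * c * r^3 + (15/64) * a * b * r^3) * Real.cos t^6 + ((-3/2) * c^2 * r + (49/64) * b^2 * r^5 + (3/2) * a^2 * r) * Real.sin t * Real.cos t + ((3/2) * c^2 * r + (-49/32) * b^2 * r^5 + (-3) * a * c * r + (3/2) * a^2 * r) * Real.sin t * Real.cos t^3 + ((63/64) * b^2 * r^5) * Real.sin t * Real.cos t^5 + ((-7/32) * b^2 * r^5) * Real.sin t * Real.cos t^7 + ((65/64) * b * c * r^3 + (15/64) * a * b * r^3) * Real.sin t^2 + ((-75/16) * b * c * r^3 + (45/16) * a * b * r^3) * Real.sin t^2 * Real.cos t^2 + ((225/64) * b * c * r^3 + (-225/64) * a * b * r^3) * Real.sin t^2 * Real.cos t^4 + ((-3/2) * c^2 * r + (49/32) * b^2 * r^5 + (3) * a * c * r + (-3/2) * a^2 * r) * Real.sin t^3 * Real.cos t + ((-105/32) * b^2 * r^5) * Real.sin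 t^3 * Real.cos t^3 + ((49/32) * b^2 * r^5) * Real.sin t^3 * Real.cos t^5 + ((25/32) * b * c * r^3 + (-15/32) * a * b * r^3) * Real.sin t^4 + ((-225/64) * b * c * r^3 + (225/64) * a * b * r^3) * Real.sin t^4 * Real.cos t^2 + ((63/64) * b^2 * r^5) * Real.sin t^5 * Real.cos t + ((-49/32) * b^2 * r^5) * Real.sin t^5 * Real.cos t^3 + ((15/64) * b * c * r^3 + (-15/64) * a * b * r^3) * Real.sin t^6 + ((7/32) * b^2 * r^5) * Real.sin t^7 * Real.cos t + ((1/2) * c^2 * r + (1) * a * c * r + (1/2) * a^2 * r) * t + ((-1/2) * c^2 * r + (1/2) * a^2 * r) * t * Real.cos t^2 + ((3/2) * b * c * r^3 + (3/2) * a * b * r^3) * t * Real.sin t * Real.cos t + ((-3/2) * b * c * r^3 + (-3/2) * a * b * r^3) * t * Real.sin t * Real.cos t^3 + ((1/2) * c^2 * r + (-1/2) * a^2 * r) * t * Real.sin t^2 + ((3/2) * b * c * r^3 + (3/2) * a * b * r^3) * t * Real.sin t^3 * Real.cos t) t := by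
  have h := (((((((((((((((((((((((((((((((hasDerivAt_pow 0 t).mul ((Real.hasDerivAt_sin t).pow 0)).mul ((Real.hasDerivAt_cos t).pow 2)).const_mul ((1/4) * c^2 * r + (-49/256) * b^2 * r^5 + (-1/4) * a^2 * r)).add ((((hasDerivAt_pow 0 t).mul ((Real.hasDerivAt_sin t).pow 0)).mul ((Real.hasDerivAt_cos t).pow 4)).const_mul ((-3/32) * c^2 * r + (49/512) * b^2 * r^5 + (3/16) * a * c * r + (-3/32) * a^2 * r))).add ((((hasDerivAt_pow 0 t).mul ((Real.hasDerivAt_sin t).pow 0)).mul ((Real.hasDerivAt_cos t).pow 6)).const_mul ((-7/256) * b^2 * r^5))).add ((((hasDerivAt_pow 0 t).mul ((Real.hasDerivAt_sin t).pow 0)).mul ((Real.hasDerivAt_cos t).pow 8)).const_mul ((7/2048) * b^2 * r^5))).add ((((hasDerivAt_pow 0 t).mul ((Real.hasDerivAt_sin t).pow 1)).mul ((Real.hasDerivAt_cos t).pow 1)).const_mul ((-41/64) * b * c * r^3 + (9/64) * a * b * r^3))).add ((((hasDerivAt_pow 0 t).mul ((Real.hasDerivAt_sin t).pow 1)).mul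 ((Real.hasDerivAt_cos t).pow 3)).const_mul ((11/16) * b * c * r^3 + (-9/16) * a * b * r^3))).add ((((hasDerivAt_pow 0 t).mul ((Real.hasDerivAt_sin t).pow 1)).mul ((Real.hasDerivAt_cos t).pow 5)).const_mul ((-15/64) * b * c * r^3 + (15/64) * a * b * r^3))).add ((((hasDerivAt_pow 0 t).mul ((Real.hasDerivAt_sin t).pow 2)).mul ((Real.hasDerivAt_cos t).pow 0)).const_mul ((-1/4) * c^2 * r + (49/256) * b^2 * r^5 + (1/4) * a^2 * r))).add ((((hasDerivAt_pow 0 t).mul ((Real.hasDerivAt_sin t).pow 2)).mul ((Real.hasDerivAt_cos t).pow 2)).const_mul ((9/16) * c^2 * r + (-147/256) * b^2 * r^5 + (-9/8) * a * c * r + (9/16) * a^2 * r))).add ((((hasDerivAt_pow 0 t).mul ((Real.hasDerivAt_sin t).pow 2)).mul ((Real.hasDerivAt_cos t).pow 4)).const_mul ((105/256) * b^2 * r^5))).add ((((hasDerivAt_pow 0 t).mul ((Real.hasDerivAt_sin t).pow 2)).mul ((Real.hasDerivAt_cos t).pow 6)).const_mul ((-49/512) * b^2 * r^5))).add ((((hasDerivAt_pow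 0 t).mul ((Real.hasDerivAt_sin t).pow 3)).mul ((Real.hasDerivAt_cos t).pow 1)).const_mul ((-11/16) * b * c * r^3 + (9/16) * a * b * r^3))).add ((((hasDerivAt_pow 0 t).mul ((Real.hasDerivAt_sin t).pow 3)).mul ((Real.hasDerivAt_cos t).pow 3)).const_mul ((25/32) * b * c * r^3 + (-25/32) * a * b * r^3))).add ((((hasDerivAt_pow 0 t).mul ((Real.hasDerivAt_sin t).pow 4)).mul ((Real.hasDerivAt_cos t).pow 0)).const_mul ((-3/32) * c^2 * r + (49/512) * b^2 * r^5 + (3/16) * a * c * r + (-3/32) * a^2 * r))).add ((((hasDerivAt_pow 0 t).mul ((Real.hasDerivAt_sin t).pow 4)).mul ((Real.hasDerivAt_cos t).pow 2)).const_mul ((-105/256) * b^2 * r^5))).add ((((hasDerivAt_pow 0 t).mul ((Real.hasDerivAt_sin t).pow 4)).mul ((Real.hasDerivAt_cos t).pow 4)).const_mul ((245/1024) * b^2 * r^5))).add ((((hasDerivAt_pow 0 t).mul ((Real.hasDerivAt_sin t).pow 5)).mul ((Real.hasDerivAt_cos t).pow 1)).const_mul ((-15/64) * b * c * r^3 + (15/64)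 * a * b * r^3))).add ((((hasDerivAt_pow 0 t).mul ((Real.hasDerivAt_sin t).pow 6)).mul ((Real.hasDerivAt_cos t).pow 0)).const_mul ((7/256) * b^2 * r^5))).add ((((hasDerivAt_pow 0 t).mul ((Real.hasDerivAt_sin t).pow 6)).mul ((Real.hasDerivAt_cos t).pow 2)).const_mul ((-49/512) * b^2 * r^5))).add ((((hasDerivAt_pow 0 t).mul ((Real.hasDerivAt_sin t).pow 8)).mul ((Real.hasDerivAt_cos t).pow 0)).const_mul ((7/2048) * b^2 * r^5))).add ((((hasDerivAt_pow 1 t).mul ((Real.hasDerivAt_sin t).pow 0)).mul ((Real.hasDerivAt_cos t).pow 0)).const_mul ((15/32) * b * c * r^3 + (15/32) * a * b * r^3))).add ((((hasDerivAt_pow 1 t).mul ((Real.hasDerivAt_sin t).pow 0)).mul ((Real.hasDerivAt_cos t).pow 2)).const_mul ((-3/8) * b * c * r^3 + (-3/8) * a * b * r^3))).add ((((hasDerivAt_pow 1 t).mul ((Real.hasDerivAt_sin t).pow 0)).mul ((Real.hasDerivAt_cos t).pow 4)).const_mul ((3/32) * b * c * r^3 + (3/32) * a * b * r^3))).add ((((hasDerivAt_pow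 1 t).mul ((Real.hasDerivAt_sin t).pow 1)).mul ((Real.hasDerivAt_cos t).pow 1)).const_mul ((-1/2) * c^2 * r + (1/2) * a^2 * r))).add ((((hasDerivAt_pow 1 t).mul ((Real.hasDerivAt_sin t).pow 2)).mul ((Real.hasDerivAt_cos t).pow 0)).const_mul ((3/8) * b * c * r^3 + (3/8) * a * b * r^3))).add ((((hasDerivAt_pow 1 t).mul ((Real.hasDerivAt_sin t).pow 2)).mul ((Real.hasDerivAt_cos t).pow 2)).const_mul ((-9/16) * b * c * r^3 + (-9/16) * a * b * r^3))).add ((((hasDerivAt_pow 1 t).mul ((Real.hasDerivAt_sin t).pow 4)).mul ((Real.hasDerivAt_cos t).pow 0)).const_mul ((3/32) * b * c * r^3 + (3/32) * a * b * r^3))).add ((((hasDerivAt_pow 2 t).mul ((Real.hasDerivAt_sin t).pow 0)).mul ((Real.hasDerivAt_cos t).pow 0)).const_mul ((1/4) * c^2 * r + (1/2) * a * c * r + (1/4) * a^2 * r)))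
  refine h.congr_deriv ?_
  simp only [Pi.pow_apply, Pi.mul_apply]
  push_cast
  ring

private lemma integrand_eq (a b c r : ℝ) (hr : r ≠ 0) (t : ℝ) :
    2 * P2 a b c t r + 2 * deriv (fun s => P1 a b c t s) r * y1 a b c t r
      = ((15/32) * b * c * r^3 + (15/32) * a * b * r^3) + ((-65/64) * b * c * r^3 + (-15/64) * a * b * r^3) * Real.cos t^2 + ((25/32) * b * c * r^3 + (-15/32) * a * b * r^3) * Real.cos t^4 + ((-15/64) * b * c * r^3 + (15/64) * a * b * r^3) * Real.cos t^6 + ((-3/2) * c^2 * r + (49/64) * b^2 * r^5 + (3/2) * a^2 * r) * Real.sin t * Real.cos t + ((3/2) * c^2 * r + (-49/32) * b^2 * r^5 + (-3) * a * c * r + (3/2) * a^2 * r) * Real.sin t * Real.cos t^3 + ((63/64) * b^2 * r^5) * Real.sin t * Real.cos t^5 + ((-7/32) * b^2 * r^5) * Real.sin t * Real.cos t^7 + ((65/64) * b * c * r^3 + (15/64) * a * b * r^3) * Real.sin t^2 + ((-75/16) * b * c * r^3 + (45/16) * a * b * r^3) * Real.sin t^2 * Real.cos t^2 + ((225/64)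 * b * c * r^3 + (-225/64) * a * b * r^3) * Real.sin t^2 * Real.cos t^4 + ((-3/2) * c^2 * r + (49/32) * b^2 * r^5 + (3) * a * c * r + (-3/2) * a^2 * r) * Real.sin t^3 * Real.cos t + ((-105/32) * b^2 * r^5) * Real.sin t^3 * Real.cos t^3 + ((49/32) * b^2 * r^5) * Real.sin t^3 * Real.cos t^5 + ((25/32) * b * c * r^3 + (-15/32) * a * b * r^3) * Real.sin t^4 + ((-225/64) * b * c * r^3 + (225/64) * a * b * r^3) * Real.sin t^4 * Real.cos t^2 + ((63/64) * b^2 * r^5) * Real.sin t^5 * Real.cos t + ((-49/32) * b^2 * r^5) * Real.sin t^5 * Real.cos t^3 + ((15/64) * b * c * r^3 + (-15/64) * a * b * r^3) * Real.sin t^6 + ((7/32) * b^2 * r^5) * Real.sin t^7 * Real.cos t + ((1/2) * c^2 * r + (1) * a * c * r + (1/2) * a^2 * r) * t + ((-1/2) * c^2 * r + (1/2) * a^2 * r) * t * Real.cos t^2 + ((3/2) * b * c * r^3 + (3/2) * a * b * r^3) * t * Real.sin t * Real.cos t + ((-3/2) * b * c * r^3 + (-3/2) * a * b * r^3) * t *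 Real.sin t * Real.cos t^3 + ((1/2) * c^2 * r + (-1/2) * a^2 * r) * t * Real.sin t^2 + ((3/2) * b * c * r^3 + (3/2) * a * b * r^3) * t * Real.sin t^3 * Real.cos t := by
  rw [P2_eq a b c r hr t, dP1_eq a b c r t, y1_eq a b c r t]
  linear_combination (((15/32) * b * c * r^3 + (15/32) * a * b * r^3) + ((-35/64) * b * c * r^3 + (15/64) * a * b * r^3) * Real.cos t^2 + ((15/64) * b * c * r^3 + (-15/64) * a * b * r^3) * Real.cos t^4 + ((-3/2) * c^2 * r + (49/64) * b^2 * r^5 + (3/2) * a^2 * r) * Real.sin t * Real.cos t + ((-49/64) * b^2 * r^5) * Real.sin t * Real.cos t^3 + ((7/32) * b^2 * r^5) * Real.sin t * Real.cos t^5 + ((95/64) * b * c * r^3 + (45/64) * a * b * r^3) * Real.sin t^2 + ((-15/4) * b * c * r^3 + (15/4) * a * b * r^3) * Real.sin t^2 * Real.cos t^2 + ((147/64) * b^2 * r^5) * Real.sin t^3 * Real.cos t + ((-7/4) * b^2 * r^5) * Real.sin t^3 * Real.cos t^3 + ((145/64) * b * c * r^3 + (15/64) * a * b * r^3) * Real.sin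 t^4 + ((105/32) * b^2 * r^5) * Real.sin t^5 * Real.cos t + ((1/2) * c^2 * r + (1) * a * c * r + (1/2) * a^2 * r) * t + ((3/2) * b * c * r^3 + (3/2) * a * b * r^3) * t * Real.sin t * Real.cos t) * Real.sin_sq_add_cos_sq t

private lemma y2_eq (a b c r : ℝ) (hr : r ≠ 0) (θ : ℝ) :
    y2 a b c θ r = (((1/4) * c^2 * r + (-49/256) * b^2 * r^5 + (-1/4) * a^2 * r) * (θ^0 * Real.sin θ^0 * Real.cos θ^2) + ((-3/32) * c^2 * r + (49/512) * b^2 * r^5 + (3/16) * a * c * r + (-3/32) * a^2 * r) * (θ^0 * Real.sin θ^0 * Real.cos θ^4) + ((-7/256) * b^2 * r^5) * (θ^0 * Real.sin θ^0 * Real.cos θ^6) + ((7/2048) * b^2 * r^5) * (θ^0 * Real.sin θ^0 * Real.cos θ^8) + ((-41/64) * b * c * r^3 + (9/64) * a * b * r^3) * (θ^0 * Real.sin θ^1 * Real.cos θ^1) + ((11/16) * b * c * r^3 + (-9/16) * a * b * r^3) * (θ^0 * Real.sin θ^1 * Real.cos θ^3) + ((-15/64) * b * c * r^3 + (15/64)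 * a * b * r^3) * (θ^0 * Real.sin θ^1 * Real.cos θ^5) + ((-1/4) * c^2 * r + (49/256) * b^2 * r^5 + (1/4) * a^2 * r) * (θ^0 * Real.sin θ^2 * Real.cos θ^0) + ((9/16) * c^2 * r + (-147/256) * b^2 * r^5 + (-9/8) * a * c * r + (9/16) * a^2 * r) * (θ^0 * Real.sin θ^2 * Real.cos θ^2) + ((105/256) * b^2 * r^5) * (θ^0 * Real.sin θ^2 * Real.cos θ^4) + ((-49/512) * b^2 * r^5) * (θ^0 * Real.sin θ^2 * Real.cos θ^6) + ((-11/16) * b * c * r^3 + (9/16) * a * b * r^3) * (θ^0 * Real.sin θ^3 * Real.cos θ^1) + ((25/32) * b * c * r^3 + (-25/32) * a * b * r^3) * (θ^0 * Real.sin θ^3 * Real.cos θ^3) + ((-3/32) * c^2 * r + (49/512) * b^2 * r^5 + (3/16) * a * c * r + (-3/32) * a^2 * r) * (θ^0 * Real.sin θ^4 * Real.cos θ^0) + ((-105/256) * b^2 * r^5) * (θ^0 * Real.sin θ^4 * Real.cos θ^2) + ((245/1024) * b^2 * r^5) * (θ^0 * Real.sin θ^4 * Real.cos θ^4) + ((-15/64)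 * b * c * r^3 + (15/64) * a * b * r^3) * (θ^0 * Real.sin θ^5 * Real.cos θ^1) + ((7/256) * b^2 * r^5) * (θ^0 * Real.sin θ^6 * Real.cos θ^0) + ((-49/512) * b^2 * r^5) * (θ^0 * Real.sin θ^6 * Real.cos θ^2) + ((7/2048) * b^2 * r^5) * (θ^0 * Real.sin θ^8 * Real.cos θ^0) + ((15/32) * b * c * r^3 + (15/32) * a * b * r^3) * (θ^1 * Real.sin θ^0 * Real.cos θ^0) + ((-3/8) * b * c * r^3 + (-3/8) * a * b * r^3) * (θ^1 * Real.sin θ^0 * Real.cos θ^2) + ((3/32) * b * c * r^3 + (3/32) * a * b * r^3) * (θ^1 * Real.sin θ^0 * Real.cos θ^4) + ((-1/2) * c^2 * r + (1/2) * a^2 * r) * (θ^1 * Real.sin θ^1 * Real.cos θ^1) + ((3/8) * b * c * r^3 + (3/8) * a * b * r^3) * (θ^1 * Real.sin θ^2 * Real.cos θ^0) + ((-9/16) * b * c * r^3 + (-9/16) * a * b * r^3) * (θ^1 * Real.sin θ^2 * Real.cos θ^2) + ((3/32) * b * c * r^3 + (3/32) * a * b * r^3) * (θ^1 * Real.sin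 θ^4 * Real.cos θ^0) + ((1/4) * c^2 * r + (1/2) * a * c * r + (1/4) * a^2 * r) * (θ^2 * Real.sin θ^0 * Real.cos θ^0))
      - (((1/4) * c^2 * r + (-49/256) * b^2 * r^5 + (-1/4) * a^2 * r) * ((0:ℝ)^0 * Real.sin (0:ℝ)^0 * Real.cos (0:ℝ)^2) + ((-3/32) * c^2 * r + (49/512) * b^2 * r^5 + (3/16) * a * c * r + (-3/32) * a^2 * r) * ((0:ℝ)^0 * Real.sin (0:ℝ)^0 * Real.cos (0:ℝ)^4) + ((-7/256) * b^2 * r^5) * ((0:ℝ)^0 * Real.sin (0:ℝ)^0 * Real.cos (0:ℝ)^6) + ((7/2048) * b^2 * r^5) * ((0:ℝ)^0 * Real.sin (0:ℝ)^0 * Real.cos (0:ℝ)^8) + ((-41/64) * b * c * r^3 + (9/64) * a * b * r^3) * ((0:ℝ)^0 * Real.sin (0:ℝ)^1 * Real.cos (0:ℝ)^1) + ((11/16) * b * c * r^3 + (-9/16) * a * b * r^3) * ((0:ℝ)^0 * Real.sin (0:ℝ)^1 * Real.cos (0:ℝ)^3) + ((-15/64) * b * c * r^3 + (15/64) * a *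 b * r^3) * ((0:ℝ)^0 * Real.sin (0:ℝ)^1 * Real.cos (0:ℝ)^5) + ((-1/4) * c^2 * r + (49/256) * b^2 * r^5 + (1/4) * a^2 * r) * ((0:ℝ)^0 * Real.sin (0:ℝ)^2 * Real.cos (0:ℝ)^0) + ((9/16) * c^2 * r + (-147/256) * b^2 * r^5 + (-9/8) * a * c * r + (9/16) * a^2 * r) * ((0:ℝ)^0 * Real.sin (0:ℝ)^2 * Real.cos (0:ℝ)^2) + ((105/256) * b^2 * r^5) * ((0:ℝ)^0 * Real.sin (0:ℝ)^2 * Real.cos (0:ℝ)^4) + ((-49/512) * b^2 * r^5) * ((0:ℝ)^0 * Real.sin (0:ℝ)^2 * Real.cos (0:ℝ)^6) + ((-11/16) * b * c * r^3 + (9/16) * a * b * r^3) * ((0:ℝ)^0 * Real.sin (0:ℝ)^3 * Real.cos (0:ℝ)^1) + ((25/32) * b * c * r^3 + (-25/32) * a * b * r^3) * ((0:ℝ)^0 * Real.sin (0:ℝ)^3 * Real.cos (0:ℝ)^3) + ((-3/32) * c^2 * r + (49/512) * b^2 * r^5 + (3/16) * a * c * r + (-3/32) * a^2 * r) * ((0:ℝ)^0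 * Real.sin (0:ℝ)^4 * Real.cos (0:ℝ)^0) + ((-105/256) * b^2 * r^5) * ((0:ℝ)^0 * Real.sin (0:ℝ)^4 * Real.cos (0:ℝ)^2) + ((245/1024) * b^2 * r^5) * ((0:ℝ)^0 * Real.sin (0:ℝ)^4 * Real.cos (0:ℝ)^4) + ((-15/64) * b * c * r^3 + (15/64) * a * b * r^3) * ((0:ℝ)^0 * Real.sin (0:ℝ)^5 * Real.cos (0:ℝ)^1) + ((7/256) * b^2 * r^5) * ((0:ℝ)^0 * Real.sin (0:ℝ)^6 * Real.cos (0:ℝ)^0) + ((-49/512) * b^2 * r^5) * ((0:ℝ)^0 * Real.sin (0:ℝ)^6 * Real.cos (0:ℝ)^2) + ((7/2048) * b^2 * r^5) * ((0:ℝ)^0 * Real.sin (0:ℝ)^8 * Real.cos (0:ℝ)^0) + ((15/32) * b * c * r^3 + (15/32) * a * b * r^3) * ((0:ℝ)^1 * Real.sin (0:ℝ)^0 * Real.cos (0:ℝ)^0) + ((-3/8) * b * c * r^3 + (-3/8) * a * b * r^3) * ((0:ℝ)^1 * Real.sin (0:ℝ)^0 * Real.cos (0:ℝ)^2) + ((3/32)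 * b * c * r^3 + (3/32) * a * b * r^3) * ((0:ℝ)^1 * Real.sin (0:ℝ)^0 * Real.cos (0:ℝ)^4) + ((-1/2) * c^2 * r + (1/2) * a^2 * r) * ((0:ℝ)^1 * Real.sin (0:ℝ)^1 * Real.cos (0:ℝ)^1) + ((3/8) * b * c * r^3 + (3/8) * a * b * r^3) * ((0:ℝ)^1 * Real.sin (0:ℝ)^2 * Real.cos (0:ℝ)^0) + ((-9/16) * b * c * r^3 + (-9/16) * a * b * r^3) * ((0:ℝ)^1 * Real.sin (0:ℝ)^2 * Real.cos (0:ℝ)^2) + ((3/32) * b * c * r^3 + (3/32) * a * b * r^3) * ((0:ℝ)^1 * Real.sin (0:ℝ)^4 * Real.cos (0:ℝ)^0) + ((1/4) * c^2 * r + (1/2) * a * c * r + (1/4) * a^2 * r) * ((0:ℝ)^2 * Real.sin (0:ℝ)^0 * Real.cos (0:ℝ)^0)) := by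
  unfold y2
  have hcont : Continuous (fun t : ℝ => 2 * P2 a b c t r + 2 * deriv (fun s => P1 a b c t s) r * y1 a b c t r) := by
    have e : (fun t : ℝ => 2 * P2 a b c t r + 2 * deriv (fun s => P1 a b c t s) r * y1 a b c t r)
        = fun t : ℝ => ((15/32) * b * c * r^3 + (15/32) * a * b * r^3) + ((-65/64) * b * c * r^3 + (-15/64) * a * b * r^3) * Real.cos t^2 + ((25/32) * b * c * r^3 + (-15/32) * a * b * r^3) * Real.cos t^4 + ((-15/64) * b * c * r^3 + (15/64) * a * b * r^3) * Real.cos t^6 + ((-3/2) * c^2 * r + (49/64) * b^2 * r^5 + (3/2) * a^2 * r) * Real.sin t * Real.cos t + ((3/2) * c^2 * r + (-49/32) * b^2 * r^5 + (-3) * a * c * r + (3/2) * a^2 * r) * Real.sin t * Real.cos t^3 + ((63/64) * b^2 * r^5) * Real.sin t * Real.cos t^5 + ((-7/32) * b^2 * r^5) * Real.sin t * Real.cos t^7 + ((65/64) * b * c * r^3 + (15/64) * a * b * r^3) * Real.sin t^2 + ((-75/16) * b * c * r^3 + (45/16) * a * b * r^3) * Real.sin t^2 * Real.cos t^2 + ((225/64)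 * b * c * r^3 + (-225/64) * a * b * r^3) * Real.sin t^2 * Real.cos t^4 + ((-3/2) * c^2 * r + (49/32) * b^2 * r^5 + (3) * a * c * r + (-3/2) * a^2 * r) * Real.sin t^3 * Real.cos t + ((-105/32) * b^2 * r^5) * Real.sin t^3 * Real.cos t^3 + ((49/32) * b^2 * r^5) * Real.sin t^3 * Real.cos t^5 + ((25/32) * b * c * r^3 + (-15/32) * a * b * r^3) * Real.sin t^4 + ((-225/64) * b * c * r^3 + (225/64) * a * b * r^3) * Real.sin t^4 * Real.cos t^2 + ((63/64) * b^2 * r^5) * Real.sin t^5 * Real.cos t + ((-49/32) * b^2 * r^5) * Real.sin t^5 * Real.cos t^3 + ((15/64) * b * c * r^3 + (-15/64) * a * b * r^3) * Real.sin t^6 + ((7/32) * b^2 * r^5) * Real.sin t^7 * Real.cos t + ((1/2) * c^2 * r + (1) * a * c * r + (1/2) * a^2 * r) * t + ((-1/2) * c^2 * r + (1/2) * a^2 * r) * t * Real.cos t^2 + ((3/2) * b * c * r^3 + (3/2) * a * b * r^3) * t * Real.sin t * Real.cos t + ((-3/2) * b * c * r^3 + (-3/2) * a * b * r^3) * t *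 Real.sin t * Real.cos t^3 + ((1/2) * c^2 * r + (-1/2) * a^2 * r) * t * Real.sin t^2 + ((3/2) * b * c * r^3 + (3/2) * a * b * r^3) * t * Real.sin t^3 * Real.cos t := funext fun t => integrand_eq a b c r hr t
    rw [e]; fun_prop
  rw [intervalIntegral.integral_eq_sub_of_hasDerivAt
      (fun t _ => by rw [integrand_eq a b c r hr t]; exact hQ2aux a b c r t)
      (hcont.intervalIntegrable 0 θ)]

/-- The second averaged function of system (9): when `a₇ = -c₇ - A₇ - C₇`
(so that the first averaged function vanishes identically),
`f̃₂(r) = (3π/32) r³ (B₇ - b₇)(A₇ + C₇)`. -/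
theorem second_averaged_function_system9
    (a₇ b₇ c₇ A₇ B₇ C₇ : ℝ) (h : a₇ = -c₇ - A₇ - C₇) :
    ∀ r : ℝ, 0 < r →
      (y2 a₇ b₇ c₇ π r - y2 A₇ B₇ C₇ (-π) r) / 2
        = (3 * π / 32) * r ^ 3 * (B₇ - b₇) * (A₇ + C₇) := by
  intro r hr
  rw [y2_eq a₇ b₇ c₇ r hr.ne' π, y2_eq A₇ B₇ C₇ r hr.ne' (-π)]
  simp only [Real.sin_pi, Real.cos_pi, Real.sin_neg, Real.cos_neg, Real.sin_zero, Real.cos_zero,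
    neg_neg, neg_zero]
  subst h
  ring
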